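/- Let (λ_k) be a binary sequence (each λ_k ∈ {0,1}), and define aₙ = λ_k/(n+1) whenever 2^k + 1 ≤ n + 1 < 2^{k+1} (k ≥ 1), with aₙ = 0 otherwise. Then the series ∑ (−1)ⁿ aₙ converges in ℝ. -/

import Mathlib

def SeriesConvTo (a : ℕ → ℝ) (s : ℝ) : Prop :=
  Filter.Tendsto (fun n => ∑ i ∈ Finset.range n, a i) Filter.atTop (nhds s)

set_option maxHeartbeats 1600000 in
/-- With `a n = λ k / (n+1)` on the dyadic block `2^k + 1 ≤ n + 1 < 2^(k+1)` (for `k ≥ 1`)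
and `a n = 0` otherwise, the alternating series `∑ (-1)^n a n` converges. -/
theorem alternating_blocks_converge (lam : ℕ → ℕ) (a : ℕ → ℝ)
    (hbin : ∀ k, lam k = 0 ∨ lam k = 1)
    (hblock : ∀ k n, 1 ≤ k → 2 ^ k + 1 ≤ n + 1 → n + 1 < 2 ^ (k + 1) →
      a n = (lam k : ℝ) / (n + 1))
    (hzero : ∀ n, (¬∃ k, 1 ≤ k ∧ 2 ^ k + 1 ≤ n + 1 ∧ n + 1 < 2 ^ (k + 1)) → a n = 0) :
    ∃ s, SeriesConvTo (fun n => (-1 : ℝ) ^ n * a n) s := by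
  classical
  -- basic bounds on a
  have ha_nonneg : ∀ n, 0 ≤ a n := by
    intro n
    by_cases h : ∃ k, 1 ≤ k ∧ 2 ^ k + 1 ≤ n + 1 ∧ n + 1 < 2 ^ (k + 1)
    · obtain ⟨k, hk1, hk2, hk3⟩ := h
      rw [hblock k n hk1 hk2 hk3]
      positivity
    · rw [hzero n h]
  have ha_le : ∀ n, a n ≤ 1 / ((n : ℝ) + 1) := by
    intro n
    by_cases h : ∃ k, 1 ≤ k ∧ 2 ^ k + 1 ≤ n + 1 ∧ n + 1 < 2 ^ (k + 1)
    · obtain ⟨k, hk1, hk2, hk3⟩ := h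
      rw [hblock k n hk1 hk2 hk3]
      have hl : (lam k : ℝ) ≤ 1 := by
        rcases hbin k with h0 | h0 <;> simp [h0]
      have hpos : (0 : ℝ) < (n : ℝ) + 1 := by positivity
      gcongr
    · rw [hzero n h]
      positivity
  -- the paired terms
  set c : ℕ → ℝ := fun j => a (2 * j) - a (2 * j + 1) with hc
  -- key bound on the pairs
  have key : ∀ j, |c j| ≤
      (if ∃ k, j + 1 = 2 ^ k then (2 : ℝ) / (j + 1) else 0)
        + 1 / (((j : ℝ) + 1) * ((j : ℝ) + 1)) := by
    intro j
    by_cases hp : ∃ k, j + 1 = 2 ^ k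
    · rw [if_pos hp]
      have h1 : |c j| ≤ a (2 * j) + a (2 * j + 1) := by
        have h2 := ha_nonneg (2 * j); have h3 := ha_nonneg (2 * j + 1)
        rw [hc]; rw [abs_sub_le_iff]; constructor <;> simp <;> linarith
      have h2 : a (2 * j) ≤ 1 / ((j : ℝ) + 1) := by
        refine (ha_le (2 * j)).trans ?_
        have : ((j : ℝ) + 1) ≤ ((2 * j : ℕ) : ℝ) + 1 := by push_cast; linarith
        gcongr
      have h3 : a (2 * j + 1) ≤ 1 / ((j : ℝ) + 1) := by
        refine (ha_le (2 * j + 1)).trans ?_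
        have : ((j : ℝ) + 1) ≤ ((2 * j + 1 : ℕ) : ℝ) + 1 := by push_cast; linarith
        gcongr
      have h4 : (0:ℝ) ≤ 1 / (((j : ℝ) + 1) * ((j : ℝ) + 1)) := by positivity
      have : (2 : ℝ) / (j + 1) = 1 / ((j:ℝ) + 1) + 1 / ((j:ℝ)+1) := by ring
      rw [this]
      linarith
    · rw [if_neg hp, zero_add]
      have hj1 : 1 ≤ j := by
        by_contra h
        exact hp ⟨0, by omega⟩
      set k := Nat.log 2 (2 * j + 1) with hk
      have hk1 : 1 ≤ k := by
        rw [hk]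
        have := (Nat.le_log_iff_pow_le (by norm_num) (by omega : 2 * j + 1 ≠ 0)).mpr
          (by omega : 2 ^ 1 ≤ 2 * j + 1)
        exact this
      have hlow : 2 ^ k ≤ 2 * j + 1 := Nat.pow_log_le_self 2 (by omega)
      have hhigh : 2 * j + 1 < 2 ^ (k + 1) := Nat.lt_pow_succ_log_self (by norm_num) _
      have heven : 2 ∣ 2 ^ k := dvd_pow_self 2 (by omega)
      obtain ⟨e, he⟩ := heven
      have hlow' : 2 ^ k + 1 ≤ 2 * j + 1 := by omega
      have hpow : (2:ℕ) ^ (k + 1) = 2 ^ k * 2 := pow_succ 2 k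
      have hhigh2 : 2 * j + 2 < 2 ^ (k + 1) := by
        rcases Nat.lt_or_ge (2 * j + 2) (2 ^ (k + 1)) with h | h
        · exact h
        · exfalso; exact hp ⟨k, by omega⟩
      have e1 : a (2 * j) = (lam k : ℝ) / ((2 * j : ℕ) + 1) :=
        hblock k (2 * j) hk1 (by omega) (by omega)
      have e2 : a (2 * j + 1) = (lam k : ℝ) / ((2 * j + 1 : ℕ) + 1) :=
        hblock k (2 * j + 1) hk1 (by omega) (by omega)
      rcases hbin k with h0 | h1
      · have hcj : c j = 0 := by rw [hc]; simp [e1, e2, h0]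
        rw [hcj, abs_zero]
        positivity
      · rw [hc]; simp only [e1, e2, h1]
        push_cast
        have hx : (0:ℝ) < 2 * (j:ℝ) + 1 := by positivity
        have hy : (0:ℝ) < 2 * (j:ℝ) + 1 + 1 := by positivity
        have habs : |(1:ℝ) / (2 * (j:ℝ) + 1) - 1 / (2 * (j:ℝ) + 1 + 1)|
            = 1 / (2 * (j:ℝ) + 1) - 1 / (2 * (j:ℝ) + 1 + 1) := by
          rw [abs_of_nonneg]
          have : (1:ℝ) / (2 * (j:ℝ) + 1 + 1) ≤ 1 / (2 * (j:ℝ) + 1) := by gcongr <;> linarith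
          linarith
        rw [habs]
        have hz : (0:ℝ) < ((j:ℝ) + 1) * ((j:ℝ) + 1) := by positivity
        rw [div_sub_div _ _ (ne_of_gt hx) (ne_of_gt hy)]
        have hnum : (1:ℝ) * (2 * (j:ℝ) + 1 + 1) - (2 * (j:ℝ) + 1) * 1 = 1 := by ring
        rw [hnum]
        rw [div_le_div_iff₀ (by positivity) hz]
        nlinarith [sq_nonneg ((j:ℝ))]
  -- summability of the bounding series
  have hsum_h : Summable (fun j : ℕ => if ∃ k, j + 1 = 2 ^ k then (2 : ℝ) / ((j : ℝ) + 1) else 0) := by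
    set h : ℕ → ℝ := fun j : ℕ => if ∃ k, j + 1 = 2 ^ k then (2 : ℝ) / ((j : ℝ) + 1) else 0 with hh
    have hi : Function.Injective (fun k : ℕ => 2 ^ k - 1) := by
      intro x y hxy
      simp only at hxy
      have hx := Nat.one_le_two_pow (n := x)
      have hy := Nat.one_le_two_pow (n := y)
      have : (2:ℕ) ^ x = 2 ^ y := by omega
      exact Nat.pow_right_injective (le_refl 2) this
    refine (Function.Injective.summable_iff hi ?_).mp ?_
    · intro x hx
      rw [hh]
      simp only
      rw [if_neg]
      rintro ⟨k, hk⟩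
      refine hx ⟨k, ?_⟩
      simp only
      have := Nat.one_le_two_pow (n := k)
      omega
    · have heq : (h ∘ fun k => 2 ^ k - 1) = fun k => 2 * ((1/2 : ℝ)) ^ k := by
        funext k
        simp only [Function.comp, hh]
        have h1 : (2:ℕ) ^ k - 1 + 1 = 2 ^ k := by
          have := Nat.one_le_two_pow (n := k); omega
        rw [if_pos ⟨k, h1⟩]
        have h2 : ((2 ^ k - 1 : ℕ) : ℝ) + 1 = (2:ℝ) ^ k := by
          have : (((2:ℕ) ^ k - 1 + 1 : ℕ) : ℝ) = (((2:ℕ) ^ k : ℕ) : ℝ) := by rw [h1]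
          push_cast at this
          linarith
        rw [h2, div_pow, one_pow]
        ring
      rw [heq]
      exact (summable_geometric_of_lt_one (r := (1/2 : ℝ)) (by norm_num) (by norm_num)).mul_left 2
  have hsum_g : Summable (fun j : ℕ => 1 / (((j : ℝ) + 1) * ((j : ℝ) + 1))) := by
    have h2 : Summable (fun n : ℕ => 1 / (n : ℝ) ^ 2) :=
      Real.summable_one_div_nat_pow.mpr (by norm_num)
    have h3 : Summable (fun n : ℕ => 1 / ((n + 1 : ℕ) : ℝ) ^ 2) :=
      (summable_nat_add_iff 1).mpr h2
    refine h3.congr fun n => ?_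
    push_cast
    ring
  have hsum_c : Summable c := by
    apply Summable.of_abs
    apply Summable.of_nonneg_of_le (fun j => abs_nonneg _) key
    exact hsum_h.add hsum_g
  obtain ⟨t, ht⟩ := hsum_c
  have hT : Filter.Tendsto (fun J => ∑ j ∈ Finset.range J, c j) Filter.atTop (nhds t) :=
    ht.tendsto_sum_nat
  -- pairing of partial sums
  have hpair : ∀ J, ∑ i ∈ Finset.range (2 * J), ((-1 : ℝ) ^ i * a i)
      = ∑ j ∈ Finset.range J, c j := by
    intro J
    induction J with
    | zero => simp
    | succ J ih =>
      have h2 : 2 * (J + 1) = (2 * J + 1) + 1 := by ring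
      rw [h2, Finset.sum_range_succ, Finset.sum_range_succ, Finset.sum_range_succ, ih]
      have hev : (-1 : ℝ) ^ (2 * J) = 1 := by
        rw [pow_mul]; norm_num
      have hod : (-1 : ℝ) ^ (2 * J + 1) = -1 := by
        rw [pow_succ, hev]; norm_num
      rw [hev, hod, hc]
      ring
  refine ⟨t, ?_⟩
  unfold SeriesConvTo
  have hdiv2 : Filter.Tendsto (fun n : ℕ => n / 2) Filter.atTop Filter.atTop :=
    Filter.tendsto_atTop_atTop.mpr (fun b => ⟨2 * b, fun n hn => by omega⟩)
  have hT2 : Filter.Tendsto (fun n : ℕ => ∑ j ∈ Finset.range (n / 2), c j)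
      Filter.atTop (nhds t) := hT.comp hdiv2
  have hr : Filter.Tendsto
      (fun n : ℕ => (∑ i ∈ Finset.range n, ((-1 : ℝ) ^ i * a i))
        - ∑ j ∈ Finset.range (n / 2), c j) Filter.atTop (nhds 0) := by
    apply squeeze_zero_norm (a := fun n : ℕ => 1 / (n : ℝ))
    · intro n
      rcases Nat.even_or_odd n with ⟨m, hm⟩ | ⟨m, hm⟩
      · have h1 : n = 2 * m := by omega
        have h2 : n / 2 = m := by omega
        rw [h2, h1, hpair m]
        simp only [sub_self, norm_zero]
        positivity
      · have h1 : n = 2 * m + 1 := by omega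
        have h2 : n / 2 = m := by omega
        rw [h2, h1, Finset.sum_range_succ, hpair m]
        have hev : (-1 : ℝ) ^ (2 * m) = 1 := by
          rw [pow_mul]; norm_num
        rw [hev]
        simp only [one_mul, add_sub_cancel_left]
        rw [Real.norm_eq_abs, abs_of_nonneg (ha_nonneg _)]
        refine (ha_le (2 * m)).trans ?_
        push_cast
        exact le_refl _
    · exact tendsto_one_div_atTop_nhds_zero_nat
  have := hr.add hT2
  simp only [zero_add] at this
  refine this.congr ?_
  intro n
  ring
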